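/- Let T = (T_1,…,T_n) be a commuting tuple of contractions on H satisfying Szegő positivity, with defect operator D_T = (∑_{F⊆{1,…,n}}(−1)^{|F|} T_F T_F*)^{1/2}, and define Π : H → H²_{D_T-space}(𝔻ⁿ) by (Π h)(z) = ∑_{k∈ℤ₊ⁿ} z^k ⊗ D_T T^{*k} h. Then Π is a well-defined bounded operator satisfying Π T_i* = M_{z_i}* Π for all i = 1,…,n, and ‖Π h‖² = lim_{k→∞} ∑_{F⊆{1,…,n}} (−1)^{|F|} ‖T_F^{*k} h‖² for all h ∈ H. In particular, if T is pure then Π is an isometry. -/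

import Mathlib

open ContinuousLinearMap Filter Topology

/-! ### Auxiliary combinatorial lemmas -/

/-- Indicator-style multi-index: value `m` on `F`, `0` elsewhere. -/
def indic {n : ℕ} (F : Finset (Fin n)) (m : ℕ) : Fin n → ℕ := fun i => if i ∈ F then m else 0

lemma indic_empty {n m : ℕ} : indic (∅ : Finset (Fin n)) m = 0 := by
  funext i; simp [indic]

lemma upd1 {n : ℕ} {a : Fin n} {F : Finset (Fin n)} (haF : a ∉ F) (k : Fin n → ℕ) (j : ℕ) :
    Function.update k a j + indic F 1 = Function.update (k + indic F 1) a j := by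
  funext i
  rcases eq_or_ne i a with h | h
  · subst h; simp [indic, haF]
  · simp [Function.update_apply, h, indic]

lemma upd2 {n : ℕ} {a : Fin n} {F : Finset (Fin n)} (haF : a ∉ F) (k : Fin n → ℕ) (j : ℕ) :
    Function.update k a j + indic (insert a F) 1 = Function.update (k + indic F 1) a (j + 1) := by
  funext i
  rcases eq_or_ne i a with h | h
  · subst h; simp [indic]
  · simp [Function.update_apply, h, indic, Finset.mem_insert]

lemma upd3 {n : ℕ} {a : Fin n} {F : Finset (Fin n)} (m : ℕ) :
    Function.update (indic F m) a m = indic (insert a F) m := by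
  funext i
  rcases eq_or_ne i a with h | h
  · subst h; simp [indic]
  · simp [Function.update_apply, h, indic, Finset.mem_insert]

/-- The key telescoping identity: summing the `n`-fold finite-difference of an arbitrary
function `g` over the box `[0,m)^G` collapses to the alternating sum at the corners. -/
lemma key_comb {n : ℕ} (m : ℕ) (G : Finset (Fin n)) (g : (Fin n → ℕ) → ℝ) :
    ∑ k ∈ Fintype.piFinset (fun i => if i ∈ G then Finset.range m else {0}),
      ∑ F ∈ G.powerset, (-1 : ℝ) ^ F.card * g (k + indic F 1)
    = ∑ F ∈ G.powerset, (-1 : ℝ) ^ F.card * g (indic F m) := by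
  induction G using Finset.induction_on generalizing g with
  | empty =>
      simp only [Finset.notMem_empty, if_false, Finset.powerset_empty, Finset.sum_singleton,
        indic_empty, add_zero, Finset.card_empty, pow_zero, one_mul]
      rw [show (fun _ : Fin n => ({0} : Finset ℕ)) = (fun i => {(fun _ : Fin n => (0:ℕ)) i}) from rfl,
        Fintype.piFinset_singleton]
      simp
      rfl
  | @insert a G ha IH =>
      -- reindex the k-sum through (j, k) ↦ update k a j
      have hsum : ∀ (f : (Fin n → ℕ) → ℝ),
          ∑ k ∈ Fintype.piFinset (fun i => if i ∈ insert a G then Finset.range m else {0}), f k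
          = ∑ j ∈ Finset.range m,
              ∑ k ∈ Fintype.piFinset (fun i => if i ∈ G then Finset.range m else {0}),
                f (Function.update k a j) := by
        intro f
        rw [← Finset.sum_product']
        refine Finset.sum_nbij' (fun k => (k a, Function.update k a 0))
          (fun p => Function.update p.2 a p.1) ?_ ?_ ?_ ?_ ?_
        · intro k hk
          simp only [Fintype.mem_piFinset] at hk
          simp only [Finset.mem_product, Fintype.mem_piFinset]
          constructor
          · have := hk a; simpa [Finset.mem_insert] using this
          · intro i
            rcases eq_or_ne i a with h | h
            · subst h; simp [ha]
            · have := hk i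
              simp only [Function.update_apply, h, if_false]
              by_cases hG : i ∈ G
              · simpa [hG, Finset.mem_insert, h] using this
              · simpa [hG, Finset.mem_insert, h] using this
        · intro p hp
          simp only [Finset.mem_product, Fintype.mem_piFinset] at hp
          simp only [Fintype.mem_piFinset]
          intro i
          rcases eq_or_ne i a with h | h
          · subst h; simpa [Function.update_self] using hp.1
          · have := hp.2 i
            simp only [Function.update_apply, h, if_false]
            by_cases hG : i ∈ G
            · simpa [hG, Finset.mem_insert, h] using this
            · simpa [hG, Finset.mem_insert, h] using this
        · intro k hk
          simp [Function.update_idem, Function.update_eq_self]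
        · intro p hp
          simp only [Finset.mem_product, Fintype.mem_piFinset] at hp
          have hpa : p.2 a = 0 := by have := hp.2 a; simpa [ha] using this
          have hupd : Function.update p.2 a (0:ℕ) = p.2 := by
            rw [← hpa, Function.update_eq_self]
          ext
          · simp
          · simp [Function.update_idem, hupd]
        · intro k hk
          simp [Function.update_idem, Function.update_eq_self]
      calc
        ∑ k ∈ Fintype.piFinset (fun i => if i ∈ insert a G then Finset.range m else {0}),
            ∑ F ∈ (insert a G).powerset, (-1:ℝ)^F.card * g (k + indic F 1)
            = ∑ j ∈ Finset.range m,
                ((∑ k ∈ Fintype.piFinset (fun i => if i ∈ G then Finset.range m else {0}),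
                    ∑ F ∈ G.powerset, (-1:ℝ)^F.card * g (Function.update (k + indic F 1) a j))
                 - ∑ k ∈ Fintype.piFinset (fun i => if i ∈ G then Finset.range m else {0}),
                    ∑ F ∈ G.powerset, (-1:ℝ)^F.card * g (Function.update (k + indic F 1) a (j+1))) := by
              rw [hsum]
              refine Finset.sum_congr rfl fun j hj => ?_
              rw [← Finset.sum_sub_distrib]
              refine Finset.sum_congr rfl fun k hk => ?_
              rw [Finset.sum_powerset_insert ha]
              have h1 : ∑ F ∈ G.powerset, (-1:ℝ)^F.card * g (Function.update k a j + indic F 1)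
                  = ∑ F ∈ G.powerset, (-1:ℝ)^F.card * g (Function.update (k + indic F 1) a j) := by
                refine Finset.sum_congr rfl fun F hF => ?_
                rw [upd1 (fun h => ha (Finset.mem_powerset.1 hF h)) k j]
              have h2 : ∑ F ∈ G.powerset,
                    (-1:ℝ)^(insert a F).card * g (Function.update k a j + indic (insert a F) 1)
                  = -∑ F ∈ G.powerset, (-1:ℝ)^F.card * g (Function.update (k + indic F 1) a (j+1)) := by
                rw [← Finset.sum_neg_distrib]
                refine Finset.sum_congr rfl fun F hF => ?_
                have haF : a ∉ F := fun h => ha (Finset.mem_powerset.1 hF h)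
                rw [upd2 haF k j, Finset.card_insert_of_notMem haF, pow_succ]
                ring
              rw [h1, h2, sub_eq_add_neg]
        _ = (∑ k ∈ Fintype.piFinset (fun i => if i ∈ G then Finset.range m else {0}),
              ∑ F ∈ G.powerset, (-1:ℝ)^F.card * g (Function.update (k + indic F 1) a 0))
            - ∑ k ∈ Fintype.piFinset (fun i => if i ∈ G then Finset.range m else {0}),
              ∑ F ∈ G.powerset, (-1:ℝ)^F.card * g (Function.update (k + indic F 1) a m) :=
              Finset.sum_range_sub' _ m
        _ = (∑ F ∈ G.powerset, (-1:ℝ)^F.card * g (indic F m))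
            - ∑ F ∈ G.powerset, (-1:ℝ)^F.card * g (indic (insert a F) m) := by
              congr 1
              · rw [← IH g]
                refine Finset.sum_congr rfl fun k hk => Finset.sum_congr rfl fun F hF => ?_
                have hka : k a = 0 := by
                  have := Fintype.mem_piFinset.1 hk a; simpa [ha] using this
                have haF : a ∉ F := fun h => ha (Finset.mem_powerset.1 hF h)
                have hz : (k + indic F 1) a = 0 := by simp [hka, indic, haF]
                rw [← hz, Function.update_eq_self]
              · refine (IH (fun c => g (Function.update c a m))).trans ?_
                simp only [upd3]
        _ = ∑ F ∈ (insert a G).powerset, (-1:ℝ)^F.card * g (indic F m) := by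
              rw [Finset.sum_powerset_insert ha, sub_eq_add_neg, ← Finset.sum_neg_distrib]
              congr 1
              refine Finset.sum_congr rfl fun F hF => ?_
              have haF : a ∉ F := fun h => ha (Finset.mem_powerset.1 hF h)
              rw [Finset.card_insert_of_notMem haF, pow_succ]
              ring

/-! ### Auxiliary list-product lemmas -/

section ListLemmas
variable {M : Type*} [Monoid M]

lemma ofFn_prod_mul {n : ℕ} (A C : Fin n → M)
    (h : ∀ i j, i ≠ j → Commute (A i) (C j)) :
    (List.ofFn fun i => A i * C i).prod = (List.ofFn A).prod * (List.ofFn C).prod := by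
  induction n with
  | zero => simp
  | succ n ih =>
      simp only [List.ofFn_succ, List.prod_cons]
      rw [ih (fun i => A i.succ) (fun i => C i.succ)
        (fun i j hij => h i.succ j.succ (fun e => hij (Fin.succ_injective _ e)))]
      have hc : Commute (C 0) ((List.ofFn fun i : Fin n => A i.succ).prod) := by
        apply Commute.list_prod_right
        intro x hx
        obtain ⟨i, rfl⟩ := Set.mem_range.1 ((List.mem_ofFn' _ _).1 hx)
        exact (h i.succ 0 (Fin.succ_ne_zero i)).symm
      rw [mul_assoc, mul_assoc, ← mul_assoc (C 0), hc.eq, mul_assoc, ← mul_assoc]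

lemma ofFn_single_prod : ∀ {n : ℕ} (i0 : Fin n) (x : M),
    (List.ofFn fun j => if j = i0 then x else 1).prod = x := by
  intro n
  induction n with
  | zero => exact fun i0 => i0.elim0
  | succ n ih =>
      intro i0 x
      rw [List.ofFn_succ, List.prod_cons]
      rcases Fin.eq_zero_or_eq_succ i0 with h | ⟨j, rfl⟩
      · subst h
        have h1 : (List.ofFn fun i : Fin n => if i.succ = (0 : Fin (n+1)) then x else 1).prod
            = 1 := by
          apply List.prod_eq_one
          intro y hy
          obtain ⟨i, rfl⟩ := Set.mem_range.1 ((List.mem_ofFn' _ _).1 hy)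
          simp [Fin.succ_ne_zero]
        rw [h1, mul_one]
        simp
      · have h1 : (if (0 : Fin (n+1)) = j.succ then x else 1) = 1 := by
          rw [if_neg]; exact fun h => (Fin.succ_ne_zero j) h.symm
        have h2 : (List.ofFn fun i : Fin n => if i.succ = j.succ then x else 1)
            = List.ofFn fun i : Fin n => if i = j then x else 1 := by
          congr 1; funext i; simp [Fin.succ_inj]
        rw [h1, h2, ih j x, one_mul]

lemma prod_map_ite_filter {ι : Type*} (F : ι → Prop) [DecidablePred F] (B : ι → M) :
    ∀ l : List ι, (l.map fun i => if F i then B i else 1).prod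
      = ((l.filter fun i => decide (F i)).map B).prod := by
  intro l
  induction l with
  | nil => simp
  | cons a l ih =>
      by_cases h : F a
      · simp only [List.map_cons, List.prod_cons, if_pos h, List.filter_cons,
          decide_eq_true h, ih]
        simp [h]
      · simp only [List.map_cons, List.prod_cons, if_neg h, one_mul, List.filter_cons, ih]
        simp [h]

end ListLemmas

lemma filter_finRange_eq_sort {n : ℕ} (F : Finset (Fin n)) :
    ((List.finRange n).filter fun i => decide (i ∈ F)) = F.sort (· ≤ ·) := by
  apply fun hp h1 h2 => List.Perm.eq_of_pairwise' (r := fun a b : Fin n => a ≤ b) h1 h2 hp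
  · rw [List.perm_ext_iff_of_nodup ((List.nodup_finRange n).filter _) (Finset.sort_nodup _ _)]
    intro a
    simp [List.mem_filter, Finset.mem_sort, List.mem_finRange]
  · exact (List.pairwise_le_finRange n).filter _
  · exact Finset.pairwise_sort _ _

/-! ### The pinned definitions -/

/-- For a tuple `S` of operators and a finite index set `F`, the product `S_F` of the
operators `S i`, `i ∈ F` (in increasing index order). -/
noncomputable def subProd {H : Type*} [NormedAddCommGroup H] [InnerProductSpace ℂ H]
    {m : ℕ} (S : Fin m → (H →L[ℂ] H)) (F : Finset (Fin m)) : H →L[ℂ] H :=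
  ((F.sort (· ≤ ·)).map S).prod

/-- The Brehmer/Szegő defect operator `∑_{F ⊆ G} (−1)^{|F|} S_F S_F*`. -/
noncomputable def brehmerDefect {H : Type*} [NormedAddCommGroup H] [InnerProductSpace ℂ H]
    [CompleteSpace H] {m : ℕ} (S : Fin m → (H →L[ℂ] H)) (G : Finset (Fin m)) :
    H →L[ℂ] H :=
  ∑ F ∈ G.powerset, (-1 : ℂ) ^ F.card • (subProd S F * adjoint (subProd S F))

/-- `T^{*k} = T_1^{*k₁} ⋯ T_n^{*kₙ}` for a multi-index `k`. -/
noncomputable def adjPow {H : Type*} [NormedAddCommGroup H] [InnerProductSpace ℂ H]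
    [CompleteSpace H] {n : ℕ} (T : Fin n → (H →L[ℂ] H)) (k : Fin n → ℕ) : H →L[ℂ] H :=
  (List.ofFn fun i => (adjoint (T i)) ^ k i).prod

/-! ### Operator-level lemmas -/

section OpLemmas
variable {H : Type*} [NormedAddCommGroup H] [InnerProductSpace ℂ H] [CompleteSpace H]

lemma adjoint_list_prod (l : List (H →L[ℂ] H)) :
    adjoint l.prod = (l.reverse.map adjoint).prod := by
  induction l with
  | nil =>
      simp only [List.prod_nil, List.reverse_nil, List.map_nil]
      rw [← star_eq_adjoint, star_one]
  | cons a l ih =>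
      simp only [List.prod_cons, List.reverse_cons, List.map_append, List.map_cons,
        List.prod_append, List.map_nil, List.prod_cons, List.prod_nil, mul_one]
      rw [← star_eq_adjoint, star_mul, star_eq_adjoint, star_eq_adjoint, ih]

lemma prod_reverse_of_comm {M : Type*} [Monoid M] (l : List M) (h : l.Pairwise Commute) :
    l.reverse.prod = l.prod :=
  (l.reverse_perm).prod_eq' (List.pairwise_reverse.mpr (h.imp fun hc => hc.symm))

lemma sort_prod_eq_ofFn {M : Type*} [Monoid M] {n : ℕ} (B : Fin n → M) (F : Finset (Fin n)) :
    ((F.sort (· ≤ ·)).map B).prod = (List.ofFn fun i => if i ∈ F then B i else 1).prod := by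
  rw [List.ofFn_eq_map, prod_map_ite_filter, filter_finRange_eq_sort]

variable {n : ℕ} (T : Fin n → (H →L[ℂ] H))

lemma commute_adjoint (hcomm : ∀ i j, Commute (T i) (T j)) (i j : Fin n) :
    Commute (adjoint (T i)) (adjoint (T j)) := by
  rw [← star_eq_adjoint, ← star_eq_adjoint]
  exact (hcomm i j).star_star

lemma adjoint_subProd (hcomm : ∀ i j, Commute (T i) (T j)) (F : Finset (Fin n)) :
    adjoint (subProd T F) = adjPow T (indic F 1) := by
  have hB := commute_adjoint T hcomm
  have hpair : ((F.sort (· ≤ ·)).map (⇑adjoint ∘ T)).Pairwise Commute := by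
    rw [List.pairwise_map]
    exact (Finset.pairwise_sort _ _).imp fun _ => hB _ _
  rw [subProd, adjoint_list_prod, List.map_reverse, List.map_map,
    prod_reverse_of_comm _ hpair, sort_prod_eq_ofFn, adjPow]
  congr 1
  congr 1
  funext i
  by_cases h : i ∈ F <;> simp [h, indic]

lemma adjPow_add (hcomm : ∀ i j, Commute (T i) (T j)) (k l : Fin n → ℕ) :
    adjPow T (k + l) = adjPow T k * adjPow T l := by
  have hB := commute_adjoint T hcomm
  rw [adjPow, adjPow, adjPow,
    ← ofFn_prod_mul _ _ (fun i j _ => (hB i j).pow_pow _ _)]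
  congr 1
  congr 1
  funext i
  rw [Pi.add_apply, pow_add]

lemma adjPow_zero : adjPow T 0 = 1 := by
  rw [adjPow]
  apply List.prod_eq_one
  intro x hx
  obtain ⟨i, rfl⟩ := Set.mem_range.1 ((List.mem_ofFn' _ _).1 hx)
  simp

lemma adjPow_smul (hcomm : ∀ i j, Commute (T i) (T j)) (m : ℕ) (k : Fin n → ℕ) :
    adjPow T (m • k) = (adjPow T k) ^ m := by
  induction m with
  | zero => simp [adjPow_zero]
  | succ m ih => rw [succ_nsmul, adjPow_add T hcomm, ih, pow_succ]

lemma adjPow_single (i0 : Fin n) : adjPow T (Pi.single i0 1) = adjoint (T i0) := by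
  rw [adjPow]
  rw [show (List.ofFn fun i => adjoint (T i) ^ Pi.single i0 1 i)
      = List.ofFn fun i => if i = i0 then adjoint (T i0) else 1 by
    congr 1
    funext i
    rcases eq_or_ne i i0 with h | h
    · subst h; simp
    · simp [Pi.single_apply, h]]
  exact ofFn_single_prod i0 _

lemma norm_prod_le_one : ∀ l : List (H →L[ℂ] H), (∀ x ∈ l, ‖x‖ ≤ 1) → ‖l.prod‖ ≤ 1 := by
  intro l
  induction l with
  | nil =>
      intro _
      rw [List.prod_nil]
      calc ‖(1 : H →L[ℂ] H)‖ = ‖ContinuousLinearMap.id ℂ H‖ := rfl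
        _ ≤ 1 := ContinuousLinearMap.norm_id_le
  | cons a l ih =>
      intro hl
      simp only [List.prod_cons]
      refine le_trans (norm_mul_le _ _) ?_
      have h1 : ‖a‖ ≤ 1 := hl a List.mem_cons_self
      have h2 : ‖l.prod‖ ≤ 1 := ih fun x hx => hl x (List.mem_cons_of_mem _ hx)
      calc ‖a‖ * ‖l.prod‖ ≤ 1 * 1 := by
            apply mul_le_mul h1 h2 (norm_nonneg _) zero_le_one
        _ = 1 := mul_one 1

lemma norm_adjPow_le_one (hcontr : ∀ i, ‖T i‖ ≤ 1) (k : Fin n → ℕ) :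
    ‖adjPow T k‖ ≤ 1 := by
  apply norm_prod_le_one
  intro x hx
  obtain ⟨i, rfl⟩ := Set.mem_range.1 ((List.mem_ofFn' _ _).1 hx)
  have hBi : ‖adjoint (T i)‖ ≤ 1 := by
    rw [LinearIsometryEquiv.norm_map ContinuousLinearMap.adjoint (T i)]
    exact hcontr i
  rcases Nat.eq_zero_or_pos (k i) with h0 | hpos
  · rw [h0, pow_zero]
    calc ‖(1 : H →L[ℂ] H)‖ = ‖ContinuousLinearMap.id ℂ H‖ := rfl
      _ ≤ 1 := ContinuousLinearMap.norm_id_le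
  · calc ‖adjoint (T i) ^ k i‖ ≤ ‖adjoint (T i)‖ ^ k i := norm_pow_le' _ hpos
      _ ≤ 1 := pow_le_one₀ (norm_nonneg _) hBi

end OpLemmas

/-! ### Quadratic-form expansion lemmas -/

section Quad
variable {H : Type*} [NormedAddCommGroup H] [InnerProductSpace ℂ H] [CompleteSpace H]
variable {n : ℕ}

lemma norm_defectRoot_sq (T : Fin n → (H →L[ℂ] H)) (DT : H →L[ℂ] H)
    (hsa : adjoint DT = DT) (hDTsq : DT ^ 2 = brehmerDefect T Finset.univ) (x : H) :
    ‖DT x‖ ^ 2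
      = ∑ F ∈ (Finset.univ : Finset (Fin n)).powerset,
          (-1 : ℝ) ^ F.card * ‖adjoint (subProd T F) x‖ ^ 2 := by
  have key : ((‖DT x‖ ^ 2 : ℝ) : ℂ)
      = ∑ F ∈ (Finset.univ : Finset (Fin n)).powerset,
          (-1 : ℂ) ^ F.card * ((‖adjoint (subProd T F) x‖ ^ 2 : ℝ) : ℂ) := by
    have h1 : ((‖DT x‖ ^ 2 : ℝ) : ℂ) = (inner ℂ (DT x) (DT x) : ℂ) := by
      rw [inner_self_eq_norm_sq_to_K]; norm_cast
    rw [h1]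
    nth_rewrite 1 [← hsa]
    rw [adjoint_inner_left]
    have h2 : DT (DT x) = (DT ^ 2) x := by rw [pow_two, ContinuousLinearMap.mul_apply]
    rw [h2, hDTsq, brehmerDefect, ContinuousLinearMap.sum_apply, inner_sum]
    refine Finset.sum_congr rfl fun F _ => ?_
    rw [ContinuousLinearMap.smul_apply, inner_smul_right, ContinuousLinearMap.mul_apply]
    congr 1
    nth_rewrite 1 [← ContinuousLinearMap.adjoint_adjoint (subProd T F)]
    rw [adjoint_inner_right, inner_self_eq_norm_sq_to_K]
    norm_cast
  exact_mod_cast key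

lemma pointwise_expansion (T : Fin n → (H →L[ℂ] H)) (hcomm : ∀ i j, Commute (T i) (T j))
    (DT : H →L[ℂ] H) (hsa : adjoint DT = DT)
    (hDTsq : DT ^ 2 = brehmerDefect T Finset.univ) (h : H) (k : Fin n → ℕ) :
    ‖DT (adjPow T k h)‖ ^ 2
      = ∑ F ∈ (Finset.univ : Finset (Fin n)).powerset,
          (-1 : ℝ) ^ F.card * ‖adjPow T (k + indic F 1) h‖ ^ 2 := by
  rw [norm_defectRoot_sq T DT hsa hDTsq]
  refine Finset.sum_congr rfl fun F _ => ?_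
  congr 2
  rw [adjoint_subProd T hcomm, ← ContinuousLinearMap.mul_apply, ← adjPow_add T hcomm,
    add_comm]

lemma indic_smul {n : ℕ} (F : Finset (Fin n)) (m : ℕ) : m • indic F 1 = indic F m := by
  funext i
  by_cases h : i ∈ F <;> simp [indic, h]

lemma adjoint_subProd_pow (T : Fin n → (H →L[ℂ] H)) (hcomm : ∀ i j, Commute (T i) (T j))
    (F : Finset (Fin n)) (m : ℕ) :
    (adjoint (subProd T F)) ^ m = adjPow T (indic F m) := by
  rw [adjoint_subProd T hcomm, ← adjPow_smul T hcomm, indic_smul]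

end Quad

/-- The canonical dilation map of a Szegő tuple `T`, realized on the Hardy space
`H²_{𝒟_T}(𝔻ⁿ)` in Taylor-coefficient form, i.e. on `ℓ²(ℤ₊ⁿ, H)`:
`(Θ h) k = D_T T^{*k} h`. It intertwines `T_i*` with `M_{z_i}*` (the coefficient
backward shift), its norm is the Brehmer limit, and it is an isometry if `T` is pure. -/
theorem canonical_dilation_map {H : Type*} [NormedAddCommGroup H]
    [InnerProductSpace ℂ H] [CompleteSpace H] {n : ℕ} (T : Fin n → (H →L[ℂ] H))
    (hcomm : ∀ i j, Commute (T i) (T j)) (hcontr : ∀ i, ‖T i‖ ≤ 1)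
    (hszego : (brehmerDefect T Finset.univ).IsPositive)
    (DT : H →L[ℂ] H) (hDTpos : DT.IsPositive)
    (hDTsq : DT ^ 2 = brehmerDefect T Finset.univ) :
    ∃ Θ : H →L[ℂ] (lp (fun _ : (Fin n → ℕ) => H) 2),
      (∀ (h : H) (k : Fin n → ℕ), (Θ h : ∀ _ : (Fin n → ℕ), H) k = DT (adjPow T k h)) ∧
      (∀ (i : Fin n) (h : H) (k : Fin n → ℕ),
        (Θ (adjoint (T i) h) : ∀ _ : (Fin n → ℕ), H) k
          = (Θ h : ∀ _ : (Fin n → ℕ), H) (k + Pi.single i 1)) ∧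
      (∀ h : H,
        Tendsto (fun m : ℕ => ∑ F : Finset (Fin n),
            (-1 : ℝ) ^ F.card * ‖((adjoint (subProd T F)) ^ m) h‖ ^ 2)
          atTop (𝓝 (‖Θ h‖ ^ 2))) ∧
      ((∀ (i : Fin n) (h : H),
          Tendsto (fun m : ℕ => ((adjoint (T i)) ^ m) h) atTop (𝓝 0)) →
        ∀ h : H, ‖Θ h‖ = ‖h‖) := by
  classical
  have hsa : adjoint DT = DT := by
    rw [← star_eq_adjoint]; exact hDTpos.isSelfAdjoint
  set c : H → (Fin n → ℕ) → H := fun h k => DT (adjPow T k h) with hc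
  set C : ℝ := ((Finset.univ : Finset (Fin n)).powerset.card : ℝ) with hCdef
  have hC0 : (0:ℝ) ≤ C := by positivity
  -- box partial sums identity
  have boxsum : ∀ (h : H) (m : ℕ),
      ∑ k ∈ Fintype.piFinset (fun _ : Fin n => Finset.range m), ‖c h k‖ ^ 2
      = ∑ F ∈ (Finset.univ : Finset (Fin n)).powerset,
          (-1 : ℝ) ^ F.card * ‖adjPow T (indic F m) h‖ ^ 2 := by
    intro h m
    have hbox : Fintype.piFinset (fun _ : Fin n => Finset.range m)
        = Fintype.piFinset (fun i : Fin n =>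
            if i ∈ (Finset.univ : Finset (Fin n)) then Finset.range m else {0}) := by
      congr 1; funext i; simp
    calc ∑ k ∈ Fintype.piFinset (fun _ : Fin n => Finset.range m), ‖c h k‖ ^ 2
        = ∑ k ∈ Fintype.piFinset (fun i : Fin n =>
              if i ∈ (Finset.univ : Finset (Fin n)) then Finset.range m else {0}),
            ∑ F ∈ (Finset.univ : Finset (Fin n)).powerset,
              (-1 : ℝ) ^ F.card * ‖adjPow T (k + indic F 1) h‖ ^ 2 := by
          rw [← hbox]
          exact Finset.sum_congr rfl fun k _ =>
            pointwise_expansion T hcomm DT hsa hDTsq h k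
      _ = ∑ F ∈ (Finset.univ : Finset (Fin n)).powerset,
            (-1 : ℝ) ^ F.card * ‖adjPow T (indic F m) h‖ ^ 2 :=
          key_comb m Finset.univ (fun v => ‖adjPow T v h‖ ^ 2)
  -- the sequence from the statement, rewritten
  have smeq : ∀ (h : H) (m : ℕ),
      (∑ F : Finset (Fin n), (-1:ℝ)^F.card * ‖((adjoint (subProd T F)) ^ m) h‖^2)
      = ∑ F ∈ (Finset.univ : Finset (Fin n)).powerset,
          (-1:ℝ)^F.card * ‖adjPow T (indic F m) h‖^2 := by
    intro h m
    rw [Finset.powerset_univ]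
    exact Finset.sum_congr rfl fun F _ => by rw [adjoint_subProd_pow T hcomm]
  -- bound on arbitrary partial sums
  have partial_bound : ∀ (h : H) (u : Finset (Fin n → ℕ)),
      ∑ k ∈ u, ‖c h k‖^2 ≤ C * ‖h‖^2 := by
    intro h u
    set N : ℕ := (u.sup fun k => Finset.univ.sup k) + 1 with hN
    have husub : u ⊆ Fintype.piFinset (fun _ : Fin n => Finset.range N) := by
      intro k hk
      rw [Fintype.mem_piFinset]
      intro i
      rw [Finset.mem_range, hN]
      exact Nat.lt_succ_of_le (le_trans (Finset.le_sup (Finset.mem_univ i))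
        (Finset.le_sup hk))
    calc ∑ k ∈ u, ‖c h k‖^2
        ≤ ∑ k ∈ Fintype.piFinset (fun _ : Fin n => Finset.range N), ‖c h k‖^2 :=
          Finset.sum_le_sum_of_subset_of_nonneg husub (fun _ _ _ => by positivity)
      _ = ∑ F ∈ (Finset.univ : Finset (Fin n)).powerset,
            (-1 : ℝ) ^ F.card * ‖adjPow T (indic F N) h‖ ^ 2 := boxsum h N
      _ ≤ ∑ _F ∈ (Finset.univ : Finset (Fin n)).powerset, ‖h‖^2 := by
          refine Finset.sum_le_sum fun F _ => ?_
          have h1 : ‖adjPow T (indic F N) h‖ ≤ ‖h‖ := by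
            calc ‖adjPow T (indic F N) h‖ ≤ ‖adjPow T (indic F N)‖ * ‖h‖ :=
                  ContinuousLinearMap.le_opNorm _ _
              _ ≤ 1 * ‖h‖ := mul_le_mul_of_nonneg_right
                  (norm_adjPow_le_one T hcontr _) (norm_nonneg h)
              _ = ‖h‖ := one_mul _
          have h2 : ‖adjPow T (indic F N) h‖^2 ≤ ‖h‖^2 :=
            pow_le_pow_left₀ (norm_nonneg _) h1 2
          have h3 : (-1:ℝ)^F.card ≤ 1 := by
            rcases neg_one_pow_eq_or ℝ F.card with hh | hh <;> rw [hh] <;> norm_num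
          calc (-1:ℝ)^F.card * ‖adjPow T (indic F N) h‖^2
              ≤ 1 * ‖adjPow T (indic F N) h‖^2 :=
                mul_le_mul_of_nonneg_right h3 (by positivity)
            _ = ‖adjPow T (indic F N) h‖^2 := one_mul _
            _ ≤ ‖h‖^2 := h2
      _ = C * ‖h‖^2 := by rw [Finset.sum_const, nsmul_eq_mul, hCdef]
  -- summability
  have hsummable : ∀ h : H, Summable (fun k => ‖c h k‖^2) := fun h =>
    summable_of_sum_le (fun k => by positivity) (partial_bound h)
  have htsum_le : ∀ h : H, (∑' k, ‖c h k‖^2) ≤ C * ‖h‖^2 := fun h =>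
    Summable.tsum_le_of_sum_le (hsummable h) (partial_bound h)
  have hmem : ∀ h : H, Memℓp (c h) 2 := by
    intro h
    apply memℓp_gen
    have heq : (fun k => ‖c h k‖ ^ (2:ENNReal).toReal) = fun k => ‖c h k‖^2 := by
      funext k
      rw [show ((2:ENNReal)).toReal = ((2:ℕ):ℝ) by simp, Real.rpow_natCast]
    rw [heq]
    exact hsummable h
  -- the linear map
  let Θ₀ : H →ₗ[ℂ] lp (fun _ : (Fin n → ℕ) => H) 2 :=
    { toFun := fun h => ⟨c h, hmem h⟩
      map_add' := fun x y => by
        apply lp.ext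
        rw [lp.coeFn_add]
        funext k
        show DT (adjPow T k (x + y)) = DT (adjPow T k x) + DT (adjPow T k y)
        rw [map_add, map_add]
      map_smul' := fun r x => by
        apply lp.ext
        rw [lp.coeFn_smul]
        funext k
        show DT (adjPow T k (r • x)) = r • DT (adjPow T k x)
        rw [map_smul, map_smul] }
  have hΘ₀coe : ∀ (h : H) (k : Fin n → ℕ),
      (Θ₀ h : ∀ _ : (Fin n → ℕ), H) k = DT (adjPow T k h) := fun h k => rfl
  -- norm squared identity
  have hnormsq : ∀ h : H, ‖Θ₀ h‖^2 = ∑' k, ‖c h k‖^2 := by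
    intro h
    have hp : (0:ℝ) < (2:ENNReal).toReal := by simp
    have hh := lp.norm_rpow_eq_tsum hp (Θ₀ h)
    rw [show ((2:ENNReal)).toReal = ((2:ℕ):ℝ) by simp] at hh
    rw [Real.rpow_natCast] at hh
    calc ‖Θ₀ h‖^2 = ∑' k, ‖(Θ₀ h : ∀ _ : (Fin n → ℕ), H) k‖ ^ ((2:ℕ):ℝ) := hh
      _ = ∑' k, ‖c h k‖^2 := by
          refine tsum_congr fun k => ?_
          rw [Real.rpow_natCast, hΘ₀coe]
  -- continuity
  have hbound : ∀ h : H, ‖Θ₀ h‖ ≤ Real.sqrt C * ‖h‖ := by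
    intro h
    have h2 : (0:ℝ) ≤ Real.sqrt C * ‖h‖ := by positivity
    have h1 : ‖Θ₀ h‖^2 ≤ (Real.sqrt C * ‖h‖)^2 := by
      rw [mul_pow, Real.sq_sqrt hC0, hnormsq h]
      exact htsum_le h
    exact (pow_le_pow_iff_left₀ (norm_nonneg _) h2 two_ne_zero).1 h1
  let Θ : H →L[ℂ] lp (fun _ : (Fin n → ℕ) => H) 2 :=
    Θ₀.mkContinuous (Real.sqrt C) hbound
  have hΘcoe : ∀ (h : H) (k : Fin n → ℕ),
      (Θ h : ∀ _ : (Fin n → ℕ), H) k = DT (adjPow T k h) := fun h k => rfl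
  have hΘnorm : ∀ h : H, ‖Θ h‖^2 = ∑' k, ‖c h k‖^2 := fun h => hnormsq h
  -- the limit statement
  have hlim : ∀ h : H,
      Tendsto (fun m : ℕ => ∑ F : Finset (Fin n),
          (-1 : ℝ) ^ F.card * ‖((adjoint (subProd T F)) ^ m) h‖ ^ 2)
        atTop (𝓝 (‖Θ h‖ ^ 2)) := by
    intro h
    have hhs : HasSum (fun k => ‖c h k‖^2) (∑' k, ‖c h k‖^2) := (hsummable h).hasSum
    have hboxmono : Monotone (fun m : ℕ =>
        Fintype.piFinset (fun _ : Fin n => Finset.range m)) := fun a b hab =>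
      Fintype.piFinset_subset _ _ fun i => Finset.range_subset_range.2 hab
    have hboxtend : Tendsto (fun m : ℕ =>
        Fintype.piFinset (fun _ : Fin n => Finset.range m)) atTop atTop := by
      apply tendsto_atTop_finset_of_monotone hboxmono
      intro k
      refine ⟨(Finset.univ.sup k) + 1, ?_⟩
      rw [Fintype.mem_piFinset]
      intro i
      exact Finset.mem_range.2 (Nat.lt_succ_of_le (Finset.le_sup (Finset.mem_univ i)))
    have h2 : Tendsto (fun m : ℕ =>
        ∑ k ∈ Fintype.piFinset (fun _ : Fin n => Finset.range m), ‖c h k‖^2)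
        atTop (𝓝 (∑' k, ‖c h k‖^2)) := hhs.comp hboxtend
    rw [hΘnorm h]
    exact Tendsto.congr (fun m => (boxsum h m).trans (smeq h m).symm) h2
  refine ⟨Θ, hΘcoe, ?_, hlim, ?_⟩
  · -- intertwining
    intro i h k
    rw [hΘcoe, hΘcoe]
    congr 1
    rw [adjPow_add T hcomm, adjPow_single, ContinuousLinearMap.mul_apply]
  · -- purity implies isometry
    intro hpure h
    have h1 : Tendsto (fun m : ℕ => ∑ F : Finset (Fin n),
        (-1:ℝ)^F.card * ‖((adjoint (subProd T F)) ^ m) h‖^2) atTop (𝓝 (‖h‖^2)) := by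
      refine Tendsto.congr (fun m => (smeq h m).symm) ?_
      have hsplit : (‖h‖^2 : ℝ)
          = ∑ F ∈ (Finset.univ : Finset (Fin n)).powerset,
              (if F = (∅ : Finset (Fin n)) then ‖h‖^2 else 0) := by
        rw [Finset.sum_ite_eq' _ (∅ : Finset (Fin n)) (fun _ => ‖h‖^2)]
        simp
      rw [hsplit]
      refine tendsto_finset_sum _ fun F _ => ?_
      by_cases hF : F = (∅ : Finset (Fin n))
      · subst hF
        rw [if_pos rfl]
        have hconst : ∀ m : ℕ,
            (-1:ℝ)^(∅ : Finset (Fin n)).card * ‖adjPow T (indic (∅:Finset (Fin n)) m) h‖^2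
            = ‖h‖^2 := by
          intro m
          rw [indic_empty, adjPow_zero, Finset.card_empty, pow_zero, one_mul]
          rfl
        exact Tendsto.congr (fun m => (hconst m).symm) tendsto_const_nhds
      · rw [if_neg hF]
        obtain ⟨i, hi⟩ := Finset.nonempty_iff_ne_empty.2 hF
        have hdecomp : ∀ m : ℕ, indic F m = indic (F.erase i) m + m • Pi.single i 1 := by
          intro m
          funext j
          rcases eq_or_ne j i with rfl | hj
          · simp [indic, hi, Finset.notMem_erase]
          · simp [indic, Finset.mem_erase, hj, Pi.single_eq_of_ne hj]
        have hle : ∀ m : ℕ, ‖adjPow T (indic F m) h‖ ≤ ‖((adjoint (T i)) ^ m) h‖ := by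
          intro m
          rw [hdecomp m, adjPow_add T hcomm, adjPow_smul T hcomm, adjPow_single,
            ContinuousLinearMap.mul_apply]
          calc ‖adjPow T (indic (F.erase i) m) (((adjoint (T i)) ^ m) h)‖
              ≤ ‖adjPow T (indic (F.erase i) m)‖ * ‖((adjoint (T i)) ^ m) h‖ :=
                ContinuousLinearMap.le_opNorm _ _
            _ ≤ 1 * ‖((adjoint (T i)) ^ m) h‖ := mul_le_mul_of_nonneg_right
                (norm_adjPow_le_one T hcontr _) (norm_nonneg _)
            _ = ‖((adjoint (T i)) ^ m) h‖ := one_mul _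
        have h0 : Tendsto (fun m : ℕ => ‖((adjoint (T i)) ^ m) h‖^2) atTop (𝓝 0) := by
          have ht := (hpure i h).norm
          rw [norm_zero] at ht
          have ht2 := ht.pow 2
          rw [show (0:ℝ)^2 = 0 by norm_num] at ht2
          exact ht2
        have hz : Tendsto (fun m : ℕ => ‖adjPow T (indic F m) h‖^2) atTop (𝓝 0) := by
          apply squeeze_zero (fun m => by positivity) (fun m => ?_) h0
          exact pow_le_pow_left₀ (norm_nonneg _) (hle m) 2
        have := hz.const_mul ((-1:ℝ)^F.card)
        rw [mul_zero] at this
        exact this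
    have h3 : ‖Θ h‖^2 = ‖h‖^2 := tendsto_nhds_unique (hlim h) h1
    have h4 := congrArg Real.sqrt h3
    rwa [Real.sqrt_sq (norm_nonneg _), Real.sqrt_sq (norm_nonneg _)] at h4
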